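/- If there exists y ∈ X with pv_f(y) = β, then P_f({x : pv_f(x) ≤ β}) = β, i.e., the bound P_f({pv_f ≤ β}) ≤ β is attained with equality. -/

import Mathlib

open MeasureTheory ENNReal

/-- The p-value of `x` w.r.t. a probability density `f`:
`pv_f(x) = P_f({t : f(t) ≤ f(x)})`. -/
noncomputable def pValue {X : Type*} [MeasurableSpace X] (m : Measure X)
    (f : X → ℝ≥0∞) (x : X) : ℝ≥0∞ :=
  ∫⁻ t in {t | f t ≤ f x}, f t ∂m

/-- If some `y ∈ X` has `pv_f(y) = β`, then `P_f({x : pv_f(x) ≤ β}) = β`: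
the bound `P_f({pv_f ≤ β}) ≤ β` is attained with equality. -/
theorem pValue_alert_prob_eq_of_exists {X : Type*} [MeasurableSpace X]
    (m : Measure X) [SigmaFinite m] (f : X → ℝ≥0∞) (hf : Measurable f)
    (hf1 : ∫⁻ x, f x ∂m = 1) (β : ℝ≥0∞)
    (hy : ∃ y, pValue m f y = β) :
    ∫⁻ x in {x | pValue m f x ≤ β}, f x ∂m = β := by
  classical
  obtain ⟨y, hy⟩ := hy
  set E : Set X := {t | f t ≤ f y} with hE
  have hβ : ∫⁻ t in E, f t ∂m = β := hy
  have hβfin : β ≠ ∞ := by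
    rw [← hβ]
    exact ne_top_of_le_ne_top (by simp [hf1]) (setLIntegral_le_lintegral _ _)
  set S : Set X := {x | pValue m f x ≤ β} with hS
  -- slices
  set T : X → Set X := fun z => {t | f y < f t ∧ f t ≤ f z} with hT
  have hTmeas : ∀ z, MeasurableSet (T z) := fun z =>
    (hf measurableSet_Ioi).inter (hf measurableSet_Iic)
  have hkey : ∀ z, z ∈ S → f y < f z → ∫⁻ t in T z, f t ∂m = 0 := by
    intro z hzS hz
    have hsplit : {t | f t ≤ f z} = E ∪ T z := by
      ext t
      simp only [Set.mem_setOf_eq, Set.mem_union, hE, hT]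
      constructor
      · intro h
        rcases le_or_gt (f t) (f y) with h' | h'
        · exact Or.inl h'
        · exact Or.inr ⟨h', h⟩
      · rintro (h | ⟨_, h⟩)
        · exact h.trans hz.le
        · exact h
    have hdisj : Disjoint E (T z) := by
      rw [Set.disjoint_left]
      intro t ht ht'
      exact absurd ht' (by simp [hE, hT] at ht ⊢; intro h; exact absurd ht (not_le.mpr h))
    have hz' : pValue m f z = ∫⁻ t in E, f t ∂m + ∫⁻ t in T z, f t ∂m := by
      rw [pValue, hsplit, lintegral_union (hTmeas z) hdisj]
    have hzS' : pValue m f z ≤ β := hzS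
    rw [hz', hβ] at hzS'
    have hle : β + ∫⁻ t in T z, f t ∂m ≤ β + 0 := by rw [add_zero]; exact hzS'
    have := (ENNReal.add_le_add_iff_left hβfin).mp hle
    exact le_antisymm this zero_le
  -- E ⊆ S
  have hES : E ⊆ S := by
    intro x hx
    have : {t | f t ≤ f x} ⊆ E := fun t ht => show f t ≤ f y from le_trans ht hx
    calc pValue m f x ≤ ∫⁻ t in E, f t ∂m := lintegral_mono_set this
      _ = β := hβ
  -- the part of S outside E has zero integral
  set D : Set X := S \ E with hD
  have hDprop : ∀ x ∈ D, pValue m f x ≤ β ∧ f y < f x := by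
    intro x hx
    exact ⟨hx.1, not_le.mp hx.2⟩
  have hD0 : ∫⁻ t in D, f t ∂m = 0 := by
    rcases Set.eq_empty_or_nonempty D with h | hne
    · simp [h]
    set c : ℝ≥0∞ := sSup (f '' D) with hc
    by_cases hmem : c ∈ f '' D
    · obtain ⟨x₀, hx₀D, hx₀⟩ := hmem
      have hsub : D ⊆ T x₀ := by
        intro x hx
        exact ⟨(hDprop x hx).2, hx₀ ▸ le_sSup (Set.mem_image_of_mem f hx)⟩
      have := hkey x₀ hx₀D.1 (hDprop x₀ hx₀D).2
      exact le_antisymm (le_trans (lintegral_mono_set hsub) this.le) zero_le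
    · obtain ⟨u, hu_mono, hu_tend, hu_mem⟩ :=
        exists_seq_tendsto_sSup (hne.image f) (OrderTop.bddAbove _)
      choose x hx using hu_mem
      have hxD : ∀ n, x n ∈ D := fun n => (hx n).1
      have hfx : ∀ n, f (x n) = u n := fun n => (hx n).2
      have hsup : ⨆ n, u n = c := by
        have := tendsto_atTop_iSup hu_mono
        exact tendsto_nhds_unique this hu_tend
      have hsub : D ⊆ ⋃ n, T (x n) := by
        intro z hz
        have hzc : f z < c := by
          refine lt_of_le_of_ne (le_sSup (Set.mem_image_of_mem f hz)) ?_
          intro h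
          exact hmem (h ▸ Set.mem_image_of_mem f hz)
        rw [← hsup, lt_iSup_iff] at hzc
        obtain ⟨n, hn⟩ := hzc
        exact Set.mem_iUnion.mpr ⟨n, (hDprop z hz).2, (hfx n) ▸ hn.le⟩
      have hle : ∫⁻ t in D, f t ∂m ≤ ∑' n, ∫⁻ t in T (x n), f t ∂m :=
        le_trans (lintegral_mono_set hsub) (lintegral_iUnion_le _ _)
      have : ∑' n, ∫⁻ t in T (x n), f t ∂m = 0 := by
        simp only [fun n => hkey (x n) (hxD n).1 (hDprop (x n) (hxD n)).2, tsum_zero]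
      exact le_antisymm (this ▸ hle) zero_le
  -- conclude
  have hSsub : S ⊆ E ∪ D := by
    intro x hx
    by_cases h : x ∈ E
    · exact Or.inl h
    · exact Or.inr ⟨hx, h⟩
  have hupper : ∫⁻ t in S, f t ∂m ≤ β :=
    calc ∫⁻ t in S, f t ∂m ≤ ∫⁻ t in E ∪ D, f t ∂m := lintegral_mono_set hSsub
      _ ≤ ∫⁻ t in E, f t ∂m + ∫⁻ t in D, f t ∂m := lintegral_union_le _ _ _
      _ = β := by rw [hβ, hD0, add_zero]
  have hlower : β ≤ ∫⁻ t in S, f t ∂m := by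
    rw [← hβ]; exact lintegral_mono_set hES
  exact le_antisymm hupper hlower
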